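/- Let R be a difference-complete distance magma. For each r ∈ R, the map f(x) = x ⊕ r is upper semicontinuous: for all x₀ ∈ R and s ∈ R with f(x₀) < s, there exists t ∈ R with x₀ < t such that f(x) < s for all x < t. -/
import Mathlib


/-- A distance magma: a totally ordered commutative unital magma `(R, ⊕, ≤, 0)`
with `r ≤ r ⊕ s` (positivity) and addition monotone in both arguments. -/
structure DistanceMagma (R : Type*) [LinearOrder R] where
  add : R → R → R
  zero : R
  pos : ∀ r s : R, r ≤ add r s
  mono : ∀ r s t u : R, r ≤ t → s ≤ u → add r s ≤ add t u
  comm : ∀ r s : R, add r s = add s r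
  unit : ∀ r : R, add r zero = r

/-- In a difference-complete distance magma, the map `x ↦ x ⊕ r` is upper
semicontinuous. -/
theorem add_upperSemicontinuous {R : Type*} [LinearOrder R] (M : DistanceMagma R)
    (diff : R → R → R)
    (hdiff : ∀ r s : R, IsLeast {x : R | r ≤ M.add s x ∧ s ≤ M.add r x} (diff r s)) :
    ∀ r x₀ s : R, M.add x₀ r < s → ∃ t : R, x₀ < t ∧ ∀ x : R, x < t → M.add x r < s := by
  intro r x₀ s h
  obtain ⟨⟨h1, h2⟩, hleast⟩ := hdiff s r
  refine ⟨diff s r, ?_, ?_⟩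
  · by_contra hle
    push_neg at hle
    exact absurd (le_trans h1 (le_trans (M.mono r (diff s r) r x₀ le_rfl hle)
      (le_of_eq (M.comm r x₀)))) (not_le_of_gt h)
  · intro x hx
    by_contra hge
    push_neg at hge
    have hrs : r ≤ s := le_trans (le_trans (M.pos r x₀) (le_of_eq (M.comm r x₀))) h.le
    have hmem : x ∈ {x : R | s ≤ M.add r x ∧ r ≤ M.add s x} :=
      ⟨le_trans hge (le_of_eq (M.comm x r)),
       le_trans (M.pos r x) (M.mono r x s x hrs le_rfl)⟩
    exact absurd (hleast hmem) (not_le_of_gt hx)
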